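/- Let F : E ⥤ B be an opfibration between small categories, C a category with small colimits, and G : E ⥤ C a functor. Then the pointwise left Kan extension of G along F evaluated at an object B of B is isomorphic to the colimit of G restricted to the fiber F⁻¹(B). -/

import Mathlib

open CategoryTheory CategoryTheory.Limits

universe v u

/-- `p : E ⥤ B` is a Grothendieck opfibration. -/
def IsOpfibration {E : Type*} [Category E] {B : Type*} [Category B] (p : E ⥤ B) : Prop :=
  ∀ (a : E) (b : B) (f : p.obj a ⟶ b),
    ∃ (a' : E) (φ : a ⟶ a'), Functor.IsStronglyCocartesian p f φ

/-- The inclusion of the fiber into the costructured arrow category. -/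
@[simps]
def fiberToCostructured {E : Type v} [SmallCategory E] {B : Type v} [SmallCategory B]
    (p : E ⥤ B) (b : B) : p.Fiber b ⥤ CostructuredArrow p b where
  obj x := CostructuredArrow.mk (eqToHom x.2)
  map {x y} φ := CostructuredArrow.homMk φ.1 (by
    have := φ.2
    rw [CategoryTheory.IsHomLift.fac' p (𝟙 b) φ.1]
    simp)
  map_id x := by apply CostructuredArrow.hom_ext; rfl
  map_comp φ ψ := by apply CostructuredArrow.hom_ext; rfl

theorem fiberToCostructured_final {E : Type v} [SmallCategory E] {B : Type v} [SmallCategory B]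
    (p : E ⥤ B) (hp : IsOpfibration p) (b : B) : (fiberToCostructured p b).Final := by
  constructor
  intro d
  obtain ⟨a', φ, hφ⟩ := hp d.left b d.hom
  haveI := hφ
  have ha' : p.obj a' = b := CategoryTheory.IsHomLift.codomain_eq p d.hom φ
  have w₀ : p.map φ ≫ eqToHom ha' = d.hom := by
    rw [CategoryTheory.IsHomLift.fac p d.hom φ]; simp
  let i₀ : StructuredArrow d (fiberToCostructured p b) :=
    StructuredArrow.mk (Y := Functor.Fiber.mk ha') (CostructuredArrow.homMk φ w₀)
  have key : ∀ j : StructuredArrow d (fiberToCostructured p b), Nonempty (i₀ ⟶ j) := by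
    intro j
    haveI : p.IsHomLift d.hom j.hom.left :=
      CategoryTheory.IsHomLift.of_fac p d.hom j.hom.left rfl j.right.2
        (by simp only [eqToHom_refl, Category.id_comp]; exact (CostructuredArrow.w j.hom).symm)
    let χ : a' ⟶ j.right.1 :=
      Functor.IsStronglyCocartesian.map p d.hom φ (b' := ((fiberToCostructured p b).obj j.right).left) (Category.comp_id d.hom).symm j.hom.left
    have hχ : φ ≫ χ = j.hom.left :=
      Functor.IsStronglyCocartesian.fac p d.hom φ (b' := ((fiberToCostructured p b).obj j.right).left) (Category.comp_id d.hom).symm j.hom.left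
    refine ⟨StructuredArrow.homMk (⟨χ, Functor.IsStronglyCocartesian.map_isHomLift p d.hom φ (b' := ((fiberToCostructured p b).obj j.right).left) (Category.comp_id d.hom).symm j.hom.left⟩ : Functor.Fiber.mk ha' ⟶ j.right) ?_⟩
    apply CostructuredArrow.hom_ext
    exact hχ
  haveI : Nonempty (StructuredArrow d (fiberToCostructured p b)) := ⟨i₀⟩
  apply zigzag_isConnected
  intro j₁ j₂
  exact Zigzag.trans (Zigzag.of_zag (Or.inr (key j₁))) (Zigzag.of_zag (Or.inl (key j₂)))

/-- For an opfibration `p : E ⥤ B` between small categories, a cocomplete category `C` and a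
functor `G : E ⥤ C`, the pointwise left Kan extension of `G` along `p`, evaluated at `b`, is
the colimit of the restriction of `G` to the fiber `p⁻¹(b)`. -/
theorem stmt10 {E : Type v} [SmallCategory E] {B : Type v} [SmallCategory B]
    {C : Type u} [Category.{v} C] [HasColimits C]
    (p : E ⥤ B) (hp : IsOpfibration p) (G : E ⥤ C) (b : B) :
    Nonempty ((p.leftKanExtension G).obj b ≅
      colimit (Functor.Fiber.fiberInclusion ⋙ G : p.Fiber b ⥤ C)) := by
  haveI := fiberToCostructured_final p hp b
  let e1 : p.leftKanExtension G ≅ p.pointwiseLeftKanExtension G :=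
    Functor.leftKanExtensionUnique _ (p.leftKanExtensionUnit G) _
      (p.pointwiseLeftKanExtensionUnit G)
  let e3 : colimit (fiberToCostructured p b ⋙ (CostructuredArrow.proj p b ⋙ G)) ≅
      colimit (CostructuredArrow.proj p b ⋙ G) :=
    Functor.Final.colimitIso (fiberToCostructured p b) (CostructuredArrow.proj p b ⋙ G)
  let e4 : (fiberToCostructured p b ⋙ (CostructuredArrow.proj p b ⋙ G)) ≅
      (Functor.Fiber.fiberInclusion ⋙ G : p.Fiber b ⥤ C) :=
    NatIso.ofComponents (fun x => Iso.refl _) (by intros; exact (Category.comp_id _).trans (Category.id_comp _).symm)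
  exact ⟨e1.app b ≪≫ e3.symm ≪≫ HasColimit.isoOfNatIso e4⟩
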